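/- Let P be a finite subset of the Euclidean plane ℝ² with P.ncard = 4 and (Bd(P)).ncard = 4, such that P is not collinear and the four points of P do not all lie on a common circle. Then (𝒱(P)).ncard = 2, and 𝒱^[n](P) = ∅ for all n ≥ 2. -/

import Mathlib

open Set

abbrev Plane : Type := EuclideanSpace ℝ (Fin 2)

/-- The Voronoi cell of a generator `p` for a generating set `P`. -/
def cell (P : Set Plane) (p : Plane) : Set Plane :=
  {x : Plane | ∀ q ∈ P, dist x p ≤ dist x q}

/-- The set of nearest generators of `x` in `P`. -/
def nearest (P : Set Plane) (x : Plane) : Set Plane :=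
  {p ∈ P | ∀ q ∈ P, dist x p ≤ dist x q}

/-- The Voronoi vertex set: points with at least 3 nearest generators. -/
def vtx (P : Set Plane) : Set Plane :=
  {x : Plane | 3 ≤ (nearest P x).encard}

/-- The boundary of a point set: its points on the frontier of its convex hull. -/
def Bd (S : Set Plane) : Set Plane :=
  S ∩ frontier (convexHull ℝ S)

/-- The number of instances of cocircularity. -/
noncomputable def Ic (P : Set Plane) : ℤ :=
  ∑ᶠ x ∈ vtx P, (((nearest P x).ncard : ℤ) - 3)

set_option maxHeartbeats 1000000

noncomputable def det3 (a b c : Plane) : ℝ :=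
  (b 0 - a 0) * (c 1 - a 1) - (b 1 - a 1) * (c 0 - a 0)

noncomputable def sq2 (a : Plane) : ℝ := a 0 ^ 2 + a 1 ^ 2

noncomputable def det4 (a b c d : Plane) : ℝ :=
  sq2 a * det3 b c d - sq2 b * det3 a c d + sq2 c * det3 a b d - sq2 d * det3 a b c

lemma dist_sq (x y : Plane) : dist x y ^ 2 = (x 0 - y 0) ^ 2 + (x 1 - y 1) ^ 2 := by
  rw [EuclideanSpace.dist_eq, Real.sq_sqrt (by positivity)]
  simp [Fin.sum_univ_two, Real.dist_eq, sq_abs]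

lemma plane_ext {x y : Plane} (h0 : x 0 = y 0) (h1 : x 1 = y 1) : x = y := by
  ext i; fin_cases i <;> assumption

lemma plane_ne {x y : Plane} (h : x ≠ y) : ¬ (x 0 = y 0 ∧ x 1 = y 1) := by
  rintro ⟨h0, h1⟩; exact h (plane_ext h0 h1)

lemma dist_eq_dist_iff {x a b : Plane} : dist x a = dist x b ↔ dist x a ^ 2 = dist x b ^ 2 := by
  constructor
  · intro h; rw [h]
  · intro h; nlinarith [dist_nonneg (x := x) (y := a), dist_nonneg (x := x) (y := b)]

lemma dist_lt_dist_iff {x a b : Plane} : dist x a < dist x b ↔ dist x a ^ 2 < dist x b ^ 2 := by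
  constructor <;> intro h <;>
    nlinarith [dist_nonneg (x := x) (y := a), dist_nonneg (x := x) (y := b)]

lemma exists_circumcenter (a b c : Plane) (h : det3 a b c ≠ 0) :
    ∃ o : Plane, dist o a = dist o b ∧ dist o a = dist o c := by
  refine ⟨!₂[((sq2 b - sq2 a) * (c 1 - a 1) - (sq2 c - sq2 a) * (b 1 - a 1)) / (2 * det3 a b c),
      ((b 0 - a 0) * (sq2 c - sq2 a) - (c 0 - a 0) * (sq2 b - sq2 a)) / (2 * det3 a b c)], ?_, ?_⟩ <;>
  · rw [dist_eq_dist_iff, dist_sq, dist_sq]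
    simp only [PiLp.toLp_apply, Matrix.cons_val_zero, Matrix.cons_val_one, Matrix.head_cons]
    unfold det3 sq2 at *
    have h' : (c 1 - a 1) * (b 0 - a 0) - (b 1 - a 1) * (c 0 - a 0) ≠ 0 := by
      intro e; apply h; linarith
    field_simp
    ring

lemma eq_of_equidist {a b c : Plane} (h : det3 a b c ≠ 0) {o o' : Plane}
    (h1 : dist o a = dist o b) (h2 : dist o a = dist o c)
    (h1' : dist o' a = dist o' b) (h2' : dist o' a = dist o' c) : o = o' := by
  rw [dist_eq_dist_iff] at h1 h2 h1' h2'
  rw [dist_sq, dist_sq] at h1 h2 h1' h2'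
  unfold det3 at h
  apply plane_ext
  · have e : det3 a b c * (o 0 - o' 0) = 0 := by
      unfold det3; linear_combination ((c 1 - a 1) / 2) * (h1 - h1') - ((b 1 - a 1) / 2) * (h2 - h2')
    unfold det3 at e
    have := mul_eq_zero.mp e
    rcases this with h' | h'
    · exact absurd h' h
    · linarith
  · have e : det3 a b c * (o 1 - o' 1) = 0 := by
      unfold det3; linear_combination (-(c 0 - a 0) / 2) * (h1 - h1') + ((b 0 - a 0) / 2) * (h2 - h2')
    unfold det3 at e
    rcases mul_eq_zero.mp e with h' | h'
    · exact absurd h' h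
    · linarith

lemma collinear_param {a b c : Plane} (h : det3 a b c = 0) (hac : a ≠ c) :
    ∃ t : ℝ, b 0 - a 0 = t * (c 0 - a 0) ∧ b 1 - a 1 = t * (c 1 - a 1) := by
  unfold det3 at h
  by_cases h0 : c 0 - a 0 = 0
  · have h1 : c 1 - a 1 ≠ 0 := by
      intro h1; exact plane_ne (Ne.symm hac) ⟨by linarith, by linarith⟩
    refine ⟨(b 1 - a 1) / (c 1 - a 1), ?_, by field_simp⟩
    rw [h0, mul_zero]
    have : (b 0 - a 0) * (c 1 - a 1) = 0 := by linear_combination h + (b 1 - a 1) * h0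
    rcases mul_eq_zero.mp this with h' | h'
    · exact h'
    · exact absurd h' h1
  · refine ⟨(b 0 - a 0) / (c 0 - a 0), by field_simp, ?_⟩
    field_simp
    linear_combination -h

lemma no_equidistant {a b c : Plane} (h : det3 a b c = 0) (hab : a ≠ b) (hac : a ≠ c)
    (hbc : b ≠ c) (x : Plane) (h1 : dist x a = dist x b) (h2 : dist x a = dist x c) : False := by
  obtain ⟨t, ht0, ht1⟩ := collinear_param h hac
  rw [dist_eq_dist_iff, dist_sq, dist_sq] at h1 h2
  have ht : t * (t - 1) * ((c 0 - a 0) ^ 2 + (c 1 - a 1) ^ 2) = 0 := by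
    linear_combination t * h2 - h1 + (x 0 - b 0 + (x 0 - a 0 - t * (c 0 - a 0))) * ht0
      + (x 1 - b 1 + (x 1 - a 1 - t * (c 1 - a 1))) * ht1
  have htne : t ≠ 0 := by
    rintro rfl; exact plane_ne hab ⟨by linarith, by linarith⟩
  have htne1 : t ≠ 1 := by
    rintro rfl; exact plane_ne hbc ⟨by linarith, by linarith⟩
  have hca : (c 0 - a 0) ^ 2 + (c 1 - a 1) ^ 2 ≠ 0 := by
    intro h'
    exact plane_ne (Ne.symm hac) ⟨by nlinarith, by nlinarith⟩
  rcases mul_eq_zero.mp ht with h' | h'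
  · rcases mul_eq_zero.mp h' with h'' | h''
    · exact htne h''
    · exact htne1 (by linarith)
  · exact hca h'

lemma key_identity (a b c s o : Plane) (h1 : dist o a = dist o b) (h2 : dist o a = dist o c) :
    det3 a b c * (dist o s ^ 2 - dist o a ^ 2) = - det4 a b c s := by
  rw [dist_eq_dist_iff, dist_sq, dist_sq] at h1 h2
  rw [dist_sq, dist_sq]
  unfold det4 det3 sq2
  linear_combination (((c 0 - a 0) * (s 1 - a 1) - (c 1 - a 1) * (s 0 - a 0))) * h1 +
    (((s 0 - a 0) * (b 1 - a 1) - (s 1 - a 1) * (b 0 - a 0))) * h2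

lemma chord_identity {p q o m : Plane} {t : ℝ} (hm0 : m 0 - p 0 = t * (q 0 - p 0))
    (hm1 : m 1 - p 1 = t * (q 1 - p 1)) (hpq : dist o p = dist o q) :
    dist o m ^ 2 = dist o p ^ 2 - t * (1 - t) * ((q 0 - p 0) ^ 2 + (q 1 - p 1) ^ 2) := by
  rw [dist_eq_dist_iff, dist_sq, dist_sq] at hpq
  rw [dist_sq, dist_sq]
  linear_combination (-t) * hpq + (-(o 0 - m 0) - (o 0 - p 0 - t * (q 0 - p 0))) * hm0
    + (-(o 1 - m 1) - (o 1 - p 1 - t * (q 1 - p 1))) * hm1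

lemma comb_apply (r : ℝ) (v p : Plane) (i : Fin 2) : (r • v +ᵥ p) i = r * v i + p i := rfl

lemma range_three (p q r : Plane) : range ![p, q, r] = {p, q, r} := by
  ext y
  constructor
  · rintro ⟨i, rfl⟩; fin_cases i <;> simp
  · intro hy
    rcases hy with rfl | rfl | rfl
    exacts [⟨0, rfl⟩, ⟨1, rfl⟩, ⟨2, rfl⟩]

lemma not_collinear_of_det3 {p q r : Plane} (h : det3 p q r ≠ 0) :
    ¬ Collinear ℝ ({p, q, r} : Set Plane) := by
  intro hc
  obtain ⟨v, hv⟩ := (collinear_iff_of_mem (show p ∈ ({p,q,r} : Set Plane) by simp)).mp hc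
  obtain ⟨rq, hq⟩ := hv q (by simp)
  obtain ⟨rr, hr⟩ := hv r (by simp)
  apply h
  have hq0 : q 0 = rq * v 0 + p 0 := by rw [hq]; rfl
  have hq1 : q 1 = rq * v 1 + p 1 := by rw [hq]; rfl
  have hr0 : r 0 = rr * v 0 + p 0 := by rw [hr]; rfl
  have hr1 : r 1 = rr * v 1 + p 1 := by rw [hr]; rfl
  unfold det3
  rw [hq0, hq1, hr0, hr1]; ring

lemma mem_interior_triangle {p q r x : Plane} (hd : det3 p q r ≠ 0)
    (h1 : 0 < det3 x q r / det3 p q r) (h2 : 0 < det3 p x r / det3 p q r)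
    (h3 : 0 < det3 p q x / det3 p q r) :
    x ∈ interior (convexHull ℝ ({p, q, r} : Set Plane)) := by
  have hindep : AffineIndependent ℝ ![p, q, r] := by
    rw [affineIndependent_iff_not_collinear, range_three]
    exact not_collinear_of_det3 hd
  have hspan : affineSpan ℝ (range ![p, q, r]) = ⊤ := by
    rw [hindep.affineSpan_eq_top_iff_card_eq_finrank_add_one]
    simp [finrank_euclideanSpace_fin]
  let bs : AffineBasis (Fin 3) ℝ Plane := ⟨![p, q, r], hindep, hspan⟩
  have hbs : ⇑bs = ![p, q, r] := rfl
  set w : Fin 3 → ℝ := ![det3 x q r / det3 p q r, det3 p x r / det3 p q r,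
    det3 p q x / det3 p q r] with hw
  have hsum : (Finset.univ : Finset (Fin 3)).sum w = 1 := by
    simp only [hw, Fin.sum_univ_three, Matrix.cons_val_zero, Matrix.cons_val_one,
      Matrix.head_cons, Matrix.cons_val_two, Matrix.tail_cons]
    field_simp
    unfold det3; ring
  have hcomb : (Finset.univ : Finset (Fin 3)).affineCombination ℝ ![p, q, r] w = x := by
    rw [Finset.affineCombination_eq_linear_combination _ _ _ hsum]
    simp only [hw, Fin.sum_univ_three, Matrix.cons_val_zero, Matrix.cons_val_one,
      Matrix.head_cons, Matrix.cons_val_two, Matrix.tail_cons]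
    apply plane_ext <;>
    · simp only [PiLp.add_apply, PiLp.smul_apply, smul_eq_mul]
      field_simp
      unfold det3; ring
  have hrange : ({p, q, r} : Set Plane) = range ⇑bs := by rw [hbs, range_three]
  rw [hrange, AffineBasis.interior_convexHull]
  intro i
  have : (bs.coord i) x = w i := by
    rw [← hcomb]
    exact bs.coord_apply_combination_of_mem (Finset.mem_univ i) hsum
  rw [this]
  fin_cases i <;> simpa [hw]

lemma div_pos_of_mul_pos {u v : ℝ} (h : 0 < u * v) : 0 < u / v := by
  rcases mul_pos_iff.mp h with ⟨h1, h2⟩ | ⟨h1, h2⟩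
  · exact div_pos h1 h2
  · exact div_pos_of_neg_of_neg h1 h2

lemma inside_contra {p q r x : Plane} {P : Set Plane} (hd : det3 p q r ≠ 0)
    (h1 : 0 < det3 x q r * det3 p q r) (h2 : 0 < det3 p x r * det3 p q r)
    (h3 : 0 < det3 p q x * det3 p q r)
    (hsub : ({p, q, r} : Set Plane) ⊆ P) (hx : x ∉ interior (convexHull ℝ P)) : False :=
  hx (interior_mono (convexHull_mono hsub)
    (mem_interior_triangle hd (div_pos_of_mul_pos h1) (div_pos_of_mul_pos h2)
      (div_pos_of_mul_pos h3)))

def Epred (p q r s x : Plane) : Prop :=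
  dist x p = dist x q ∧ dist x p = dist x r ∧ dist x p < dist x s

lemma vtx_of_small {S : Set Plane} (h : S.encard ≤ 2) : vtx S = ∅ := by
  rw [eq_empty_iff_forall_notMem]
  intro x hx
  have h1 : nearest S x ⊆ S := fun y hy => hy.1
  have := (hx.trans ((encard_mono h1).trans h))
  norm_num at this

lemma mem_vtx_iff {a b c d : Plane} (hab : a ≠ b) (hac : a ≠ c) (had : a ≠ d) (hbc : b ≠ c)
    (hbd : b ≠ d) (hcd : c ≠ d)
    (hcirc : ¬ ∃ o : Plane, ∃ r : ℝ, 0 < r ∧ dist a o = r ∧ dist b o = r ∧ dist c o = r ∧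
      dist d o = r) (x : Plane) :
    x ∈ vtx {a, b, c, d} ↔
      Epred b c d a x ∨ Epred a c d b x ∨ Epred a b d c x ∨ Epred a b c d x := by
  set P : Set Plane := {a, b, c, d} with hP
  have haP : a ∈ P := by simp [hP]
  have hbP : b ∈ P := by simp [hP]
  have hcP : c ∈ P := by simp [hP]
  have hdP : d ∈ P := by simp [hP]
  set N := nearest P x with hN
  have hNsub : N ⊆ P := fun y hy => hy.1
  constructor
  · intro hx
    have hx3 : 3 ≤ N.encard := hx
    have hsmall : ∀ u v : Plane, N ⊆ {u, v} → False := by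
      intro u v hsub
      have h2 : N.encard ≤ 2 := by
        refine (encard_mono hsub).trans ?_
        have h' := encard_insert_le ({v} : Set Plane) u
        simp only [encard_singleton] at h'
        exact h'.trans (by norm_num)
      have := hx3.trans h2
      norm_num at this
    have hmiss : ∀ y : Plane, y ∈ P → y ∉ N → ∃ q ∈ P, dist x q < dist x y := by
      intro y hyP hyN
      by_contra hcon
      push_neg at hcon
      exact hyN ⟨hyP, fun q hq => le_of_not_gt fun hlt => absurd hq (by
        intro hqP; exact absurd hlt (not_lt.mpr (hcon q hqP)))⟩
    -- helper to produce Epred given three members and one non-member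
    by_cases ha : a ∈ N <;> by_cases hb : b ∈ N <;> by_cases hc : c ∈ N <;> by_cases hd : d ∈ N
    · -- all four: cocircular contradiction
      exfalso
      have e1 : dist x a = dist x b := le_antisymm (ha.2 b hbP) (hb.2 a haP)
      have e2 : dist x a = dist x c := le_antisymm (ha.2 c hcP) (hc.2 a haP)
      have e3 : dist x a = dist x d := le_antisymm (ha.2 d hdP) (hd.2 a haP)
      have hr : 0 < dist x a := by
        rcases eq_or_lt_of_le (dist_nonneg (x := x) (y := a)) with h0 | h0
        · exfalso
          have hxa : x = a := dist_eq_zero.mp h0.symm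
          have hxb : x = b := dist_eq_zero.mp (by rw [← e1]; exact h0.symm)
          exact hab (hxa ▸ hxb)
        · exact h0
      exact hcirc ⟨x, dist x a, hr, dist_comm x a ▸ rfl, by rw [dist_comm, ← e1],
        by rw [dist_comm, ← e2], by rw [dist_comm, ← e3]⟩
    · -- a b c in, d out
      right; right; right
      have e1 : dist x a = dist x b := le_antisymm (ha.2 b hbP) (hb.2 a haP)
      have e2 : dist x a = dist x c := le_antisymm (ha.2 c hcP) (hc.2 a haP)
      obtain ⟨q, hqP, hq⟩ := hmiss d hdP hd
      exact ⟨e1, e2, lt_of_le_of_lt (ha.2 q hqP) hq⟩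
    · -- a b d in, c out
      right; right; left
      have e1 : dist x a = dist x b := le_antisymm (ha.2 b hbP) (hb.2 a haP)
      have e2 : dist x a = dist x d := le_antisymm (ha.2 d hdP) (hd.2 a haP)
      obtain ⟨q, hqP, hq⟩ := hmiss c hcP hc
      exact ⟨e1, e2, lt_of_le_of_lt (ha.2 q hqP) hq⟩
    · -- a b in only
      exact False.elim (hsmall a b (fun y hy => by
        rcases hNsub hy with rfl | rfl | rfl | rfl
        · exact mem_insert _ _
        · exact mem_insert_of_mem _ rfl
        · exact absurd hy hc
        · exact absurd hy hd))
    · -- a c d in, b out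
      right; left
      have e1 : dist x a = dist x c := le_antisymm (ha.2 c hcP) (hc.2 a haP)
      have e2 : dist x a = dist x d := le_antisymm (ha.2 d hdP) (hd.2 a haP)
      obtain ⟨q, hqP, hq⟩ := hmiss b hbP hb
      exact ⟨e1, e2, lt_of_le_of_lt (ha.2 q hqP) hq⟩
    · exact False.elim (hsmall a c (fun y hy => by
        rcases hNsub hy with rfl | rfl | rfl | rfl
        · exact mem_insert _ _
        · exact absurd hy hb
        · exact mem_insert_of_mem _ rfl
        · exact absurd hy hd))
    · exact False.elim (hsmall a d (fun y hy => by
        rcases hNsub hy with rfl | rfl | rfl | rfl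
        · exact mem_insert _ _
        · exact absurd hy hb
        · exact absurd hy hc
        · exact mem_insert_of_mem _ rfl))
    · exact False.elim (hsmall a a (fun y hy => by
        rcases hNsub hy with rfl | rfl | rfl | rfl
        · exact mem_insert _ _
        · exact absurd hy hb
        · exact absurd hy hc
        · exact absurd hy hd))
    · -- b c d in, a out
      left
      have e1 : dist x b = dist x c := le_antisymm (hb.2 c hcP) (hc.2 b hbP)
      have e2 : dist x b = dist x d := le_antisymm (hb.2 d hdP) (hd.2 b hbP)
      obtain ⟨q, hqP, hq⟩ := hmiss a haP ha
      exact ⟨e1, e2, lt_of_le_of_lt (hb.2 q hqP) hq⟩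
    · exact False.elim (hsmall b c (fun y hy => by
        rcases hNsub hy with rfl | rfl | rfl | rfl
        · exact absurd hy ha
        · exact mem_insert _ _
        · exact mem_insert_of_mem _ rfl
        · exact absurd hy hd))
    · exact False.elim (hsmall b d (fun y hy => by
        rcases hNsub hy with rfl | rfl | rfl | rfl
        · exact absurd hy ha
        · exact mem_insert _ _
        · exact absurd hy hc
        · exact mem_insert_of_mem _ rfl))
    · exact False.elim (hsmall b b (fun y hy => by
        rcases hNsub hy with rfl | rfl | rfl | rfl
        · exact absurd hy ha
        · exact mem_insert _ _
        · exact absurd hy hc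
        · exact absurd hy hd))
    · exact False.elim (hsmall c d (fun y hy => by
        rcases hNsub hy with rfl | rfl | rfl | rfl
        · exact absurd hy ha
        · exact absurd hy hb
        · exact mem_insert _ _
        · exact mem_insert_of_mem _ rfl))
    · exact False.elim (hsmall c c (fun y hy => by
        rcases hNsub hy with rfl | rfl | rfl | rfl
        · exact absurd hy ha
        · exact absurd hy hb
        · exact mem_insert _ _
        · exact absurd hy hd))
    · exact False.elim (hsmall d d (fun y hy => by
        rcases hNsub hy with rfl | rfl | rfl | rfl
        · exact absurd hy ha
        · exact absurd hy hb
        · exact absurd hy hc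
        · exact mem_insert _ _))
    · exact False.elim (hsmall a a (fun y hy => by
        rcases hNsub hy with rfl | rfl | rfl | rfl
        · exact absurd hy ha
        · exact absurd hy hb
        · exact absurd hy hc
        · exact absurd hy hd))
  · intro h
    show (3 : ℕ∞) ≤ N.encard
    have key : ∀ u v w : Plane, u ≠ v → u ≠ w → v ≠ w → ({u, v, w} : Set Plane) ⊆ N →
        3 ≤ N.encard := by
      intro u v w huv huw hvw hsub
      have h3 : ({u, v, w} : Set Plane).encard = 3 := by
        rw [encard_insert_of_notMem (by simp [huv, huw]), encard_pair hvw]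
        rfl
      exact h3 ▸ encard_mono hsub
    rcases h with ⟨e1, e2, e3⟩ | ⟨e1, e2, e3⟩ | ⟨e1, e2, e3⟩ | ⟨e1, e2, e3⟩
    · refine key b c d hbc hbd hcd ?_
      rintro y (rfl | rfl | rfl)
      · exact ⟨hbP, fun q hq => by
          rcases hq with rfl | rfl | rfl | rfl <;>
            first | exact le_rfl | exact e1.le | exact e2.le | exact e3.le⟩
      · exact ⟨hcP, fun q hq => by
          rcases hq with rfl | rfl | rfl | rfl <;> rw [← e1] <;>
            first | exact le_rfl | exact e1.le | exact e2.le | exact e3.le⟩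
      · exact ⟨hdP, fun q hq => by
          rcases hq with rfl | rfl | rfl | rfl <;> rw [← e2] <;>
            first | exact le_rfl | exact e1.le | exact e2.le | exact e3.le⟩
    · refine key a c d hac had hcd ?_
      rintro y (rfl | rfl | rfl)
      · exact ⟨haP, fun q hq => by
          rcases hq with rfl | rfl | rfl | rfl <;>
            first | exact le_rfl | exact e1.le | exact e2.le | exact e3.le⟩
      · exact ⟨hcP, fun q hq => by
          rcases hq with rfl | rfl | rfl | rfl <;> rw [← e1] <;>
            first | exact le_rfl | exact e1.le | exact e2.le | exact e3.le⟩
      · exact ⟨hdP, fun q hq => by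
          rcases hq with rfl | rfl | rfl | rfl <;> rw [← e2] <;>
            first | exact le_rfl | exact e1.le | exact e2.le | exact e3.le⟩
    · refine key a b d hab had hbd ?_
      rintro y (rfl | rfl | rfl)
      · exact ⟨haP, fun q hq => by
          rcases hq with rfl | rfl | rfl | rfl <;>
            first | exact le_rfl | exact e1.le | exact e2.le | exact e3.le⟩
      · exact ⟨hbP, fun q hq => by
          rcases hq with rfl | rfl | rfl | rfl <;> rw [← e1] <;>
            first | exact le_rfl | exact e1.le | exact e2.le | exact e3.le⟩
      · exact ⟨hdP, fun q hq => by
          rcases hq with rfl | rfl | rfl | rfl <;> rw [← e2] <;>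
            first | exact le_rfl | exact e1.le | exact e2.le | exact e3.le⟩
    · refine key a b c hab hac hbc ?_
      rintro y (rfl | rfl | rfl)
      · exact ⟨haP, fun q hq => by
          rcases hq with rfl | rfl | rfl | rfl <;>
            first | exact le_rfl | exact e1.le | exact e2.le | exact e3.le⟩
      · exact ⟨hbP, fun q hq => by
          rcases hq with rfl | rfl | rfl | rfl <;> rw [← e1] <;>
            first | exact le_rfl | exact e1.le | exact e2.le | exact e3.le⟩
      · exact ⟨hcP, fun q hq => by
          rcases hq with rfl | rfl | rfl | rfl <;> rw [← e2] <;>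
            first | exact le_rfl | exact e1.le | exact e2.le | exact e3.le⟩

lemma sep_pos {x y : Plane} (h : x ≠ y) : 0 < (y 0 - x 0) ^ 2 + (y 1 - x 1) ^ 2 := by
  by_contra h'
  push_neg at h'
  have h0 : (y 0 - x 0) ^ 2 = 0 := by nlinarith [sq_nonneg (y 0 - x 0), sq_nonneg (y 1 - x 1)]
  have h1 : (y 1 - x 1) ^ 2 = 0 := by nlinarith [sq_nonneg (y 0 - x 0), sq_nonneg (y 1 - x 1)]
  have h0' := sq_eq_zero_iff.mp h0
  have h1' := sq_eq_zero_iff.mp h1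
  exact plane_ne h ⟨by linarith, by linarith⟩

lemma prod_neg_of_lt {D P u v : ℝ} (hk : D * (u - v) = -P) (h : v < u) (hD : D ≠ 0) :
    P * D < 0 := by
  have h1 : P * D = -(D ^ 2 * (u - v)) := by linear_combination D * hk
  have h2 : 0 < D ^ 2 := by positivity
  nlinarith

lemma prod_nonneg_of_le {D P u v : ℝ} (hk : D * (u - v) = -P) (h : u ≤ v) : 0 ≤ P * D := by
  have h1 : P * D = -(D ^ 2 * (u - v)) := by linear_combination D * hk
  nlinarith [sq_nonneg D]

lemma lt_of_prod_neg {D P u v : ℝ} (hk : D * (u - v) = -P) (h : P * D < 0) : v < u := by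
  have h1 : P * D = -(D ^ 2 * (u - v)) := by linear_combination D * hk
  nlinarith [sq_nonneg D]

lemma le_of_prod_nonneg {D P u v : ℝ} (hk : D * (u - v) = -P) (h : 0 ≤ P * D) (hD : D ≠ 0) :
    u ≤ v := by
  have h1 : P * D = -(D ^ 2 * (u - v)) := by linear_combination D * hk
  have h2 : 0 < D ^ 2 := by positivity
  nlinarith

lemma chord_out {p q o m : Plane} {t : ℝ} (hm0 : m 0 - p 0 = t * (q 0 - p 0))
    (hm1 : m 1 - p 1 = t * (q 1 - p 1)) (hpq : dist o p = dist o q) (hsep : p ≠ q)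
    (ht : t < 0 ∨ 1 < t) : dist o p ^ 2 < dist o m ^ 2 := by
  have hc := chord_identity hm0 hm1 hpq
  have hs := sep_pos hsep
  rcases ht with h | h
  · nlinarith [mul_pos (by linarith : (0:ℝ) < -t) (by linarith : (0:ℝ) < 1 - t), hs, hc]
  · nlinarith [mul_pos (by linarith : (0:ℝ) < t) (by linarith : (0:ℝ) < t - 1), hs, hc]

lemma chord_in {p q o m : Plane} {t : ℝ} (hm0 : m 0 - p 0 = t * (q 0 - p 0))
    (hm1 : m 1 - p 1 = t * (q 1 - p 1)) (hpq : dist o p = dist o q) (hsep : p ≠ q)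
    (h0 : 0 < t) (h1 : t < 1) : dist o m ^ 2 < dist o p ^ 2 := by
  have hc := chord_identity hm0 hm1 hpq
  nlinarith [mul_pos h0 (by linarith : (0:ℝ) < 1 - t), sep_pos hsep, hc]

lemma master (a b c d : Plane) (hab : a ≠ b) (hac : a ≠ c) (had : a ≠ d) (hbc : b ≠ c)
    (hbd : b ≠ d) (hcd : c ≠ d)
    (hcirc : ¬ ∃ o : Plane, ∃ r : ℝ, 0 < r ∧ dist a o = r ∧ dist b o = r ∧ dist c o = r ∧
      dist d o = r)
    (hs2 : det3 a c d ≠ 0) (hs4 : det3 a b c ≠ 0)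
    (hq2 : det4 a c d b * det3 a c d < 0)
    (hq4 : det4 a b c d * det3 a b c < 0)
    (hn1 : 0 ≤ det4 b c d a * det3 b c d)
    (hn3 : 0 ≤ det4 a b d c * det3 a b d) :
    ∃ o₁ o₂ : Plane, o₁ ≠ o₂ ∧ vtx {a, b, c, d} = {o₁, o₂} := by
  obtain ⟨o₁, e1, e2⟩ := exists_circumcenter a c d hs2
  obtain ⟨o₂, f1, f2⟩ := exists_circumcenter a b c hs4
  have ho₁ : dist o₁ a < dist o₁ b := by
    rw [dist_lt_dist_iff]
    exact lt_of_prod_neg (key_identity a c d b o₁ e1 e2) hq2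
  have ho₂ : dist o₂ a < dist o₂ d := by
    rw [dist_lt_dist_iff]
    exact lt_of_prod_neg (key_identity a b c d o₂ f1 f2) hq4
  have hne : o₁ ≠ o₂ := by
    rintro rfl
    exact (ne_of_lt ho₁) f1
  refine ⟨o₁, o₂, hne, ?_⟩
  ext x
  rw [mem_vtx_iff hab hac had hbc hbd hcd hcirc]
  constructor
  · rintro (⟨g1, g2, g3⟩ | ⟨g1, g2, g3⟩ | ⟨g1, g2, g3⟩ | ⟨g1, g2, g3⟩)
    · exfalso
      by_cases hz : det3 b c d = 0
      · exact no_equidistant hz hbc hbd hcd x g1 g2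
      · have hle : dist x a ^ 2 ≤ dist x b ^ 2 :=
          le_of_prod_nonneg (key_identity b c d a x g1 g2) hn1 hz
        have := dist_lt_dist_iff.mp g3
        linarith
    · exact mem_insert_iff.mpr (Or.inl (eq_of_equidist hs2 g1 g2 e1 e2))
    · exfalso
      by_cases hz : det3 a b d = 0
      · exact no_equidistant hz hab had hbd x g1 g2
      · have hle : dist x c ^ 2 ≤ dist x a ^ 2 :=
          le_of_prod_nonneg (key_identity a b d c x g1 g2) hn3 hz
        have := dist_lt_dist_iff.mp g3
        linarith
    · exact mem_insert_iff.mpr (Or.inr (mem_singleton_iff.mpr (eq_of_equidist hs4 g1 g2 f1 f2)))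
  · rintro (rfl | rfl)
    · exact Or.inr (Or.inl ⟨e1, e2, ho₁⟩)
    · exact Or.inr (Or.inr (Or.inr ⟨f1, f2, ho₂⟩))

lemma pair_ab (a b c d : Plane) (hab : a ≠ b) (hac : a ≠ c) (had : a ≠ d) (hbc : b ≠ c)
    (hbd : b ≠ d) (hcd : c ≠ d)
    (hcirc : ¬ ∃ o : Plane, ∃ r : ℝ, 0 < r ∧ dist a o = r ∧ dist b o = r ∧ dist c o = r ∧
      dist d o = r)
    (hSa : det3 b c d ≠ 0) (hSb : det3 a c d ≠ 0)
    (hQa : det4 b c d a * det3 b c d < 0) (hQb : det4 a c d b * det3 a c d < 0)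
    (hQc : 0 ≤ det4 a b d c * det3 a b d) (hQd : 0 ≤ det4 a b c d * det3 a b c) :
    ∃ o₁ o₂ : Plane, o₁ ≠ o₂ ∧ vtx {a, b, c, d} = {o₁, o₂} := by
  have hset : ({c, a, d, b} : Set Plane) = {a, b, c, d} := by ext y; simp; tauto
  have e1 : det3 c d b = det3 b c d := by unfold det3; ring
  have e2 : det3 c a d = -det3 a c d := by unfold det3; ring
  have e3 : det4 c d b a * det3 c d b = det4 b c d a * det3 b c d := by unfold det4 det3 sq2; ring
  have e4 : det4 c a d b * det3 c a d = det4 a c d b * det3 a c d := by unfold det4 det3 sq2; ring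
  have e5 : det4 a d b c * det3 a d b = det4 a b d c * det3 a b d := by unfold det4 det3 sq2; ring
  have e6 : det4 c a b d * det3 c a b = det4 a b c d * det3 a b c := by unfold det4 det3 sq2; ring
  obtain ⟨o₁, o₂, hne, hv⟩ := master c a d b hac.symm hcd hbc.symm had hab hbd.symm
    (fun ⟨o, r, h0, h1, h2, h3, h4⟩ => hcirc ⟨o, r, h0, h2, h4, h1, h3⟩)
    (by rw [e1]; exact hSa) (by rw [e2]; exact neg_ne_zero.mpr hSb)
    (by rw [e3]; exact hQa) (by rw [e4]; exact hQb)
    (by rw [e5]; exact hQc) (by rw [e6]; exact hQd)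
  exact ⟨o₁, o₂, hne, by rw [← hset]; exact hv⟩

lemma pair_ac (a b c d : Plane) (hab : a ≠ b) (hac : a ≠ c) (had : a ≠ d) (hbc : b ≠ c)
    (hbd : b ≠ d) (hcd : c ≠ d)
    (hcirc : ¬ ∃ o : Plane, ∃ r : ℝ, 0 < r ∧ dist a o = r ∧ dist b o = r ∧ dist c o = r ∧
      dist d o = r)
    (hSa : det3 b c d ≠ 0) (hSc : det3 a b d ≠ 0)
    (hQa : det4 b c d a * det3 b c d < 0) (hQc : det4 a b d c * det3 a b d < 0)
    (hQb : 0 ≤ det4 a c d b * det3 a c d) (hQd : 0 ≤ det4 a b c d * det3 a b c) :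
    ∃ o₁ o₂ : Plane, o₁ ≠ o₂ ∧ vtx {a, b, c, d} = {o₁, o₂} := by
  have hset : ({b, a, d, c} : Set Plane) = {a, b, c, d} := by ext y; simp; tauto
  have e1 : det3 b d c = -det3 b c d := by unfold det3; ring
  have e2 : det3 b a d = -det3 a b d := by unfold det3; ring
  have e3 : det4 b d c a * det3 b d c = det4 b c d a * det3 b c d := by unfold det4 det3 sq2; ring
  have e4 : det4 b a d c * det3 b a d = det4 a b d c * det3 a b d := by unfold det4 det3 sq2; ring
  have e5 : det4 a d c b * det3 a d c = det4 a c d b * det3 a c d := by unfold det4 det3 sq2; ring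
  have e6 : det4 b a c d * det3 b a c = det4 a b c d * det3 a b c := by unfold det4 det3 sq2; ring
  obtain ⟨o₁, o₂, hne, hv⟩ := master b a d c hab.symm hbd hbc had hac hcd.symm
    (fun ⟨o, r, h0, h1, h2, h3, h4⟩ => hcirc ⟨o, r, h0, h2, h1, h4, h3⟩)
    (by rw [e1]; exact neg_ne_zero.mpr hSa) (by rw [e2]; exact neg_ne_zero.mpr hSc)
    (by rw [e3]; exact hQa) (by rw [e4]; exact hQc)
    (by rw [e5]; exact hQb) (by rw [e6]; exact hQd)
  exact ⟨o₁, o₂, hne, by rw [← hset]; exact hv⟩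

lemma pair_ad (a b c d : Plane) (hab : a ≠ b) (hac : a ≠ c) (had : a ≠ d) (hbc : b ≠ c)
    (hbd : b ≠ d) (hcd : c ≠ d)
    (hcirc : ¬ ∃ o : Plane, ∃ r : ℝ, 0 < r ∧ dist a o = r ∧ dist b o = r ∧ dist c o = r ∧
      dist d o = r)
    (hSa : det3 b c d ≠ 0) (hSd : det3 a b c ≠ 0)
    (hQa : det4 b c d a * det3 b c d < 0) (hQd : det4 a b c d * det3 a b c < 0)
    (hQb : 0 ≤ det4 a c d b * det3 a c d) (hQc : 0 ≤ det4 a b d c * det3 a b d) :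
    ∃ o₁ o₂ : Plane, o₁ ≠ o₂ ∧ vtx {a, b, c, d} = {o₁, o₂} := by
  have hset : ({b, a, c, d} : Set Plane) = {a, b, c, d} := by ext y; simp; tauto
  have e2 : det3 b a c = -det3 a b c := by unfold det3; ring
  have e4 : det4 b a c d * det3 b a c = det4 a b c d * det3 a b c := by unfold det4 det3 sq2; ring
  have e6 : det4 b a d c * det3 b a d = det4 a b d c * det3 a b d := by unfold det4 det3 sq2; ring
  obtain ⟨o₁, o₂, hne, hv⟩ := master b a c d hab.symm hbc hbd hac had hcd
    (fun ⟨o, r, h0, h1, h2, h3, h4⟩ => hcirc ⟨o, r, h0, h2, h1, h3, h4⟩)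
    hSa (by rw [e2]; exact neg_ne_zero.mpr hSd)
    hQa (by rw [e4]; exact hQd)
    hQb (by rw [e6]; exact hQc)
  exact ⟨o₁, o₂, hne, by rw [← hset]; exact hv⟩

lemma pair_bc (a b c d : Plane) (hab : a ≠ b) (hac : a ≠ c) (had : a ≠ d) (hbc : b ≠ c)
    (hbd : b ≠ d) (hcd : c ≠ d)
    (hcirc : ¬ ∃ o : Plane, ∃ r : ℝ, 0 < r ∧ dist a o = r ∧ dist b o = r ∧ dist c o = r ∧
      dist d o = r)
    (hSb : det3 a c d ≠ 0) (hSc : det3 a b d ≠ 0)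
    (hQb : det4 a c d b * det3 a c d < 0) (hQc : det4 a b d c * det3 a b d < 0)
    (hQa : 0 ≤ det4 b c d a * det3 b c d) (hQd : 0 ≤ det4 a b c d * det3 a b c) :
    ∃ o₁ o₂ : Plane, o₁ ≠ o₂ ∧ vtx {a, b, c, d} = {o₁, o₂} := by
  have hset : ({a, b, d, c} : Set Plane) = {a, b, c, d} := by ext y; simp; tauto
  have e1 : det3 a d c = -det3 a c d := by unfold det3; ring
  have e3 : det4 a d c b * det3 a d c = det4 a c d b * det3 a c d := by unfold det4 det3 sq2; ring
  have e5 : det4 b d c a * det3 b d c = det4 b c d a * det3 b c d := by unfold det4 det3 sq2; ring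
  obtain ⟨o₁, o₂, hne, hv⟩ := master a b d c hab had hac hbd hbc hcd.symm
    (fun ⟨o, r, h0, h1, h2, h3, h4⟩ => hcirc ⟨o, r, h0, h1, h2, h4, h3⟩)
    (by rw [e1]; exact neg_ne_zero.mpr hSb) hSc
    (by rw [e3]; exact hQb) hQc
    (by rw [e5]; exact hQa) hQd
  exact ⟨o₁, o₂, hne, by rw [← hset]; exact hv⟩

lemma pair_cd (a b c d : Plane) (hab : a ≠ b) (hac : a ≠ c) (had : a ≠ d) (hbc : b ≠ c)
    (hbd : b ≠ d) (hcd : c ≠ d)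
    (hcirc : ¬ ∃ o : Plane, ∃ r : ℝ, 0 < r ∧ dist a o = r ∧ dist b o = r ∧ dist c o = r ∧
      dist d o = r)
    (hSc : det3 a b d ≠ 0) (hSd : det3 a b c ≠ 0)
    (hQc : det4 a b d c * det3 a b d < 0) (hQd : det4 a b c d * det3 a b c < 0)
    (hQa : 0 ≤ det4 b c d a * det3 b c d) (hQb : 0 ≤ det4 a c d b * det3 a c d) :
    ∃ o₁ o₂ : Plane, o₁ ≠ o₂ ∧ vtx {a, b, c, d} = {o₁, o₂} := by
  have hset : ({a, c, b, d} : Set Plane) = {a, b, c, d} := by ext y; simp; tauto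
  have e2 : det3 a c b = -det3 a b c := by unfold det3; ring
  have e4 : det4 a c b d * det3 a c b = det4 a b c d * det3 a b c := by unfold det4 det3 sq2; ring
  have e5 : det4 c b d a * det3 c b d = det4 b c d a * det3 b c d := by unfold det4 det3 sq2; ring
  obtain ⟨o₁, o₂, hne, hv⟩ := master a c b d hac hab had hbc.symm hcd hbd
    (fun ⟨o, r, h0, h1, h2, h3, h4⟩ => hcirc ⟨o, r, h0, h1, h3, h2, h4⟩)
    hSc (by rw [e2]; exact neg_ne_zero.mpr hSd)
    hQc (by rw [e4]; exact hQd)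
    (by rw [e5]; exact hQa) hQb
  exact ⟨o₁, o₂, hne, by rw [← hset]; exact hv⟩

set_option maxHeartbeats 1000000

lemma coll_case (a b c d : Plane) (t : ℝ) (hab : a ≠ b) (hac : a ≠ c) (had : a ≠ d)
    (hbc : b ≠ c) (hbd : b ≠ d) (hcd : c ≠ d)
    (hcol : ¬ Collinear ℝ ({a, b, c, d} : Set Plane))
    (hcirc : ¬ ∃ o : Plane, ∃ r : ℝ, 0 < r ∧ dist a o = r ∧ dist b o = r ∧ dist c o = r ∧
      dist d o = r)
    (ht0 : b 0 - a 0 = t * (c 0 - a 0)) (ht1 : b 1 - a 1 = t * (c 1 - a 1))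
    (hpos : 0 < t) (hlt : t < 1) :
    ∃ o₁ o₂ : Plane, o₁ ≠ o₂ ∧ vtx {a, b, c, d} = {o₁, o₂} := by
  have hs4 : det3 a b c = 0 := by
    unfold det3; linear_combination (c 1 - a 1) * ht0 - (c 0 - a 0) * ht1
  have hcolall : ∀ u : ℝ, d 0 - a 0 = u * (c 0 - a 0) → d 1 - a 1 = u * (c 1 - a 1) → False := by
    intro u hu0 hu1
    apply hcol
    rw [collinear_iff_of_mem (show a ∈ ({a, b, c, d} : Set Plane) by simp)]
    refine ⟨c - a, fun p hp => ?_⟩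
    have hsub0 : (c - a) 0 = c 0 - a 0 := rfl
    have hsub1 : (c - a) 1 = c 1 - a 1 := rfl
    rcases hp with rfl | rfl | rfl | rfl
    · exact ⟨0, plane_ext (by rw [comb_apply, hsub0]; ring)
        (by rw [comb_apply, hsub1]; ring)⟩
    · exact ⟨t, plane_ext (by rw [comb_apply, hsub0]; linarith)
        (by rw [comb_apply, hsub1]; linarith)⟩
    · exact ⟨1, plane_ext (by rw [comb_apply, hsub0]; ring)
        (by rw [comb_apply, hsub1]; ring)⟩
    · exact ⟨u, plane_ext (by rw [comb_apply, hsub0]; linarith)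
        (by rw [comb_apply, hsub1]; linarith)⟩
  have hs1 : det3 b c d ≠ 0 := by
    intro hz
    have hz' : det3 b d c = 0 := by unfold det3 at hz ⊢; linarith
    obtain ⟨u, hu0, hu1⟩ := collinear_param hz' hbc
    exact hcolall (u + t - u * t)
      (by linear_combination hu0 + (1 - u) * ht0) (by linear_combination hu1 + (1 - u) * ht1)
  have hs3 : det3 a b d ≠ 0 := by
    intro hz
    have hz' : det3 a d b = 0 := by unfold det3 at hz ⊢; linarith
    obtain ⟨u, hu0, hu1⟩ := collinear_param hz' hab
    exact hcolall (u * t) (by linear_combination hu0 + u * ht0)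
      (by linear_combination hu1 + u * ht1)
  have hs2 : det3 a c d ≠ 0 := by
    intro hz
    have hz' : det3 a d c = 0 := by unfold det3 at hz ⊢; linarith
    obtain ⟨u, hu0, hu1⟩ := collinear_param hz' hac
    exact hcolall u hu0 hu1
  have hne1t : (1 : ℝ) - t ≠ 0 := by linarith
  -- a is strictly outside the circumcircle of (b, c, d)
  obtain ⟨oA, eA1, eA2⟩ := exists_circumcenter b c d hs1
  have hA0 : a 0 - b 0 = (-t / (1 - t)) * (c 0 - b 0) := by
    field_simp
    linear_combination -ht0
  have hA1 : a 1 - b 1 = (-t / (1 - t)) * (c 1 - b 1) := by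
    field_simp
    linear_combination -ht1
  have houtA : dist oA b ^ 2 < dist oA a ^ 2 :=
    chord_out hA0 hA1 eA1 hbc (Or.inl (div_neg_of_neg_of_pos (by linarith) (by linarith)))
  have hQa : det4 b c d a * det3 b c d < 0 :=
    prod_neg_of_lt (key_identity b c d a oA eA1 eA2) houtA hs1
  -- c is strictly outside the circumcircle of (a, b, d)
  obtain ⟨oC, eC1, eC2⟩ := exists_circumcenter a b d hs3
  have hC0 : c 0 - a 0 = (1 / t) * (b 0 - a 0) := by
    field_simp
    linear_combination -ht0
  have hC1 : c 1 - a 1 = (1 / t) * (b 1 - a 1) := by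
    field_simp
    linear_combination -ht1
  have houtC : dist oC a ^ 2 < dist oC c ^ 2 :=
    chord_out hC0 hC1 eC1 hab (Or.inr ((one_lt_div hpos).mpr hlt))
  have hQc : det4 a b d c * det3 a b d < 0 :=
    prod_neg_of_lt (key_identity a b d c oC eC1 eC2) houtC hs3
  -- b is strictly inside the circumcircle of (a, c, d)
  obtain ⟨oB, eB1, eB2⟩ := exists_circumcenter a c d hs2
  have hinB : dist oB b ^ 2 < dist oB a ^ 2 := chord_in ht0 ht1 eB1 hac hpos hlt
  have hQb : 0 ≤ det4 a c d b * det3 a c d :=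
    prod_nonneg_of_le (key_identity a c d b oB eB1 eB2) hinB.le
  have hQd : 0 ≤ det4 a b c d * det3 a b c := by rw [hs4, mul_zero]
  exact pair_ac a b c d hab hac had hbc hbd hcd hcirc hs1 hs3 hQa hQc hQb hQd

lemma coll0 (a b c d : Plane) (hab : a ≠ b) (hac : a ≠ c) (had : a ≠ d)
    (hbc : b ≠ c) (hbd : b ≠ d) (hcd : c ≠ d)
    (hcol : ¬ Collinear ℝ ({a, b, c, d} : Set Plane))
    (hcirc : ¬ ∃ o : Plane, ∃ r : ℝ, 0 < r ∧ dist a o = r ∧ dist b o = r ∧ dist c o = r ∧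
      dist d o = r)
    (hz : det3 a b c = 0) :
    ∃ o₁ o₂ : Plane, o₁ ≠ o₂ ∧ vtx {a, b, c, d} = {o₁, o₂} := by
  obtain ⟨t, ht0, ht1⟩ := collinear_param hz hac
  have htne0 : t ≠ 0 := by
    rintro rfl
    simp only [zero_mul] at ht0 ht1
    exact plane_ne hab ⟨by linarith, by linarith⟩
  have htne1 : t ≠ 1 := by
    rintro rfl
    simp only [one_mul] at ht0 ht1
    exact plane_ne hbc ⟨by linarith, by linarith⟩
  rcases lt_trichotomy t 0 with hlt | heq | hpos
  · -- a is the middle point: use order (b, a, c, d)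
    have hset : ({b, a, c, d} : Set Plane) = {a, b, c, d} := by ext y; simp; tauto
    have ht1' : t - 1 ≠ 0 := by intro h; exact htne1 (by linarith)
    have hu0 : a 0 - b 0 = (t / (t - 1)) * (c 0 - b 0) := by
      field_simp
      linear_combination ht0
    have hu1 : a 1 - b 1 = (t / (t - 1)) * (c 1 - b 1) := by
      field_simp
      linear_combination ht1
    have hupos : 0 < t / (t - 1) := div_pos_of_neg_of_neg hlt (by linarith)
    have hult : t / (t - 1) < 1 := by
      have he : t / (t - 1) - 1 = 1 / (t - 1) := by field_simp; ring
      have : (1 : ℝ) / (t - 1) < 0 := div_neg_of_pos_of_neg one_pos (by linarith)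
      linarith [he ▸ this]
    obtain ⟨o₁, o₂, hne, hv⟩ := coll_case b a c d (t / (t - 1)) hab.symm hbc hbd hac had hcd
      (by rw [hset]; exact hcol)
      (fun ⟨o, r, h0, h1, h2, h3, h4⟩ => hcirc ⟨o, r, h0, h2, h1, h3, h4⟩)
      hu0 hu1 hupos hult
    exact ⟨o₁, o₂, hne, by rw [← hset]; exact hv⟩
  · exact absurd heq htne0
  · rcases lt_trichotomy t 1 with hlt1 | heq1 | hgt1
    · exact coll_case a b c d t hab hac had hbc hbd hcd hcol hcirc ht0 ht1 hpos hlt1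
    · exact absurd heq1 htne1
    · -- c is the middle point: use order (a, c, b, d)
      have hset : ({a, c, b, d} : Set Plane) = {a, b, c, d} := by ext y; simp; tauto
      have hu0 : c 0 - a 0 = (1 / t) * (b 0 - a 0) := by
        field_simp
        linear_combination -ht0
      have hu1 : c 1 - a 1 = (1 / t) * (b 1 - a 1) := by
        field_simp
        linear_combination -ht1
      obtain ⟨o₁, o₂, hne, hv⟩ := coll_case a c b d (1 / t) hac hab had hbc.symm hcd hbd
        (by rw [hset]; exact hcol)
        (fun ⟨o, r, h0, h1, h2, h3, h4⟩ => hcirc ⟨o, r, h0, h1, h3, h2, h4⟩)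
        hu0 hu1 (by positivity) ((div_lt_one (by linarith)).mpr hgt1)
      exact ⟨o₁, o₂, hne, by rw [← hset]; exact hv⟩

lemma main_pair (a b c d : Plane) (hab : a ≠ b) (hac : a ≠ c) (had : a ≠ d) (hbc : b ≠ c)
    (hbd : b ≠ d) (hcd : c ≠ d)
    (hcol : ¬ Collinear ℝ ({a, b, c, d} : Set Plane))
    (hcirc : ¬ ∃ o : Plane, ∃ r : ℝ, 0 < r ∧ dist a o = r ∧ dist b o = r ∧ dist c o = r ∧
      dist d o = r)
    (hint : ∀ p ∈ ({a, b, c, d} : Set Plane), p ∉ interior (convexHull ℝ ({a, b, c, d} : Set Plane))) :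
    ∃ o₁ o₂ : Plane, o₁ ≠ o₂ ∧ vtx {a, b, c, d} = {o₁, o₂} := by
  by_cases hz4 : det3 a b c = 0
  · exact coll0 a b c d hab hac had hbc hbd hcd hcol hcirc hz4
  by_cases hz3 : det3 a b d = 0
  · have hset : ({a, b, d, c} : Set Plane) = {a, b, c, d} := by ext y; simp; tauto
    obtain ⟨o₁, o₂, hne, hv⟩ := coll0 a b d c hab had hac hbd hbc hcd.symm
      (by rw [hset]; exact hcol)
      (fun ⟨o, r, h0, h1, h2, h3, h4⟩ => hcirc ⟨o, r, h0, h1, h2, h4, h3⟩) hz3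
    exact ⟨o₁, o₂, hne, by rw [← hset]; exact hv⟩
  by_cases hz2 : det3 a c d = 0
  · have hset : ({a, c, d, b} : Set Plane) = {a, b, c, d} := by ext y; simp; tauto
    obtain ⟨o₁, o₂, hne, hv⟩ := coll0 a c d b hac had hab hcd hbc.symm hbd.symm
      (by rw [hset]; exact hcol)
      (fun ⟨o, r, h0, h1, h2, h3, h4⟩ => hcirc ⟨o, r, h0, h1, h4, h2, h3⟩) hz2
    exact ⟨o₁, o₂, hne, by rw [← hset]; exact hv⟩
  by_cases hz1 : det3 b c d = 0
  · have hset : ({b, c, d, a} : Set Plane) = {a, b, c, d} := by ext y; simp; tauto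
    obtain ⟨o₁, o₂, hne, hv⟩ := coll0 b c d a hbc hbd hab.symm hcd hac.symm had.symm
      (by rw [hset]; exact hcol)
      (fun ⟨o, r, h0, h1, h2, h3, h4⟩ => hcirc ⟨o, r, h0, h4, h1, h2, h3⟩) hz1
    exact ⟨o₁, o₂, hne, by rw [← hset]; exact hv⟩
  have hid : det3 b c d - det3 a c d + det3 a b d - det3 a b c = 0 := by unfold det3; ring
  have k1 : det4 b c d a = -det4 a b c d := by unfold det4 det3 sq2; ring
  have k2 : det4 a c d b = det4 a b c d := by unfold det4 det3 sq2; ring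
  have k3 : det4 a b d c = -det4 a b c d := by unfold det4 det3 sq2; ring
  have j1 : det3 a c b = -det3 a b c := by unfold det3; ring
  have j2 : det3 b a d = -det3 a b d := by unfold det3; ring
  have j3 : det3 b c a = det3 a b c := by unfold det3; ring
  have j4 : det3 c b d = -det3 b c d := by unfold det3; ring
  have j5 : det3 d b c = det3 b c d := by unfold det3; ring
  have j6 : det3 a d c = -det3 a c d := by unfold det3; ring
  have hK : det4 a b c d ≠ 0 := by
    intro hzero
    obtain ⟨o, f1, f2⟩ := exists_circumcenter a b c hz4
    have hk := key_identity a b c d o f1 f2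
    rw [hzero, neg_zero, mul_eq_zero] at hk
    rcases hk with h | h
    · exact hz4 h
    · have hda : dist o a = dist o d := dist_eq_dist_iff.mpr (by linarith)
      have hr : 0 < dist o a := by
        rcases eq_or_lt_of_le (dist_nonneg (x := o) (y := a)) with h0 | h0
        · exfalso
          have hoa : o = a := dist_eq_zero.mp h0.symm
          have hob : o = b := dist_eq_zero.mp (by rw [← f1]; exact h0.symm)
          exact hab (hoa ▸ hob)
        · exact h0
      exact hcirc ⟨o, dist o a, hr, by rw [dist_comm], by rw [dist_comm, ← f1],
        by rw [dist_comm, ← f2], by rw [dist_comm, ← hda]⟩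
  have hsub_bcd : ({b, c, d} : Set Plane) ⊆ ({a, b, c, d} : Set Plane) := by
    intro y hy; simp at hy ⊢; tauto
  have hsub_acd : ({a, c, d} : Set Plane) ⊆ ({a, b, c, d} : Set Plane) := by
    intro y hy; simp at hy ⊢; tauto
  have hsub_abd : ({a, b, d} : Set Plane) ⊆ ({a, b, c, d} : Set Plane) := by
    intro y hy; simp at hy ⊢; tauto
  have hsub_abc : ({a, b, c} : Set Plane) ⊆ ({a, b, c, d} : Set Plane) := by
    intro y hy; simp at hy ⊢; tauto
  have hKa := hint a (by simp)
  have hKb := hint b (by simp)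
  have hKc := hint c (by simp)
  have hKd := hint d (by simp)
  rcases lt_or_gt_of_ne hz1 with h1 | h1 <;>
    rcases lt_or_gt_of_ne hz2 with h2 | h2 <;>
      rcases lt_or_gt_of_ne hz3 with h3 | h3 <;>
        rcases lt_or_gt_of_ne hz4 with h4 | h4 <;>
          rcases lt_or_gt_of_ne hK with hk | hk
  -- p1 (neg neg neg neg)
  · exact pair_ac a b c d hab hac had hbc hbd hcd hcirc hz1 hz3
      (by rw [k1]; exact mul_neg_of_pos_of_neg (neg_pos.mpr hk) h1)
      (by rw [k3]; exact mul_neg_of_pos_of_neg (neg_pos.mpr hk) h3)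
      (by rw [k2]; exact (mul_pos_of_neg_of_neg hk h2).le)
      (mul_pos_of_neg_of_neg hk h4).le
  · exact master a b c d hab hac had hbc hbd hcd hcirc hz2 hz4
      (by rw [k2]; exact mul_neg_of_pos_of_neg hk h2)
      (mul_neg_of_pos_of_neg hk h4)
      (by rw [k1]; exact (mul_pos_of_neg_of_neg (neg_lt_zero.mpr hk) h1).le)
      (by rw [k3]; exact (mul_pos_of_neg_of_neg (neg_lt_zero.mpr hk) h3).le)
  -- p2 kill_b
  · exact (inside_contra hz2 (mul_pos_of_neg_of_neg h1 h2) (mul_pos_of_neg_of_neg h3 h2)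
      (by rw [j1]; exact mul_pos_of_neg_of_neg (neg_lt_zero.mpr h4) h2) hsub_acd hKb).elim
  · exact (inside_contra hz2 (mul_pos_of_neg_of_neg h1 h2) (mul_pos_of_neg_of_neg h3 h2)
      (by rw [j1]; exact mul_pos_of_neg_of_neg (neg_lt_zero.mpr h4) h2) hsub_acd hKb).elim
  -- p3 kill_a
  · exact (inside_contra hz1 (mul_pos_of_neg_of_neg h2 h1)
      (by rw [j2]; exact mul_pos_of_neg_of_neg (neg_lt_zero.mpr h3) h1)
      (by rw [j3]; exact mul_pos_of_neg_of_neg h4 h1) hsub_bcd hKa).elim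
  · exact (inside_contra hz1 (mul_pos_of_neg_of_neg h2 h1)
      (by rw [j2]; exact mul_pos_of_neg_of_neg (neg_lt_zero.mpr h3) h1)
      (by rw [j3]; exact mul_pos_of_neg_of_neg h4 h1) hsub_bcd hKa).elim
  -- p4 (neg neg pos pos)
  · exact pair_ad a b c d hab hac had hbc hbd hcd hcirc hz1 hz4
      (by rw [k1]; exact mul_neg_of_pos_of_neg (neg_pos.mpr hk) h1)
      (mul_neg_of_neg_of_pos hk h4)
      (by rw [k2]; exact (mul_pos_of_neg_of_neg hk h2).le)
      (by rw [k3]; exact (mul_pos (neg_pos.mpr hk) h3).le)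
  · exact pair_bc a b c d hab hac had hbc hbd hcd hcirc hz2 hz3
      (by rw [k2]; exact mul_neg_of_pos_of_neg hk h2)
      (by rw [k3]; exact mul_neg_of_neg_of_pos (neg_lt_zero.mpr hk) h3)
      (by rw [k1]; exact (mul_pos_of_neg_of_neg (neg_lt_zero.mpr hk) h1).le)
      (mul_pos hk h4).le
  -- p5 kill_d
  · exact (inside_contra hz4 (by rw [j5]; exact mul_pos_of_neg_of_neg h1 h4)
      (by rw [j6]; exact mul_pos_of_neg_of_neg (neg_lt_zero.mpr h2) h4)
      (mul_pos_of_neg_of_neg h3 h4) hsub_abc hKd).elim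
  · exact (inside_contra hz4 (by rw [j5]; exact mul_pos_of_neg_of_neg h1 h4)
      (by rw [j6]; exact mul_pos_of_neg_of_neg (neg_lt_zero.mpr h2) h4)
      (mul_pos_of_neg_of_neg h3 h4) hsub_abc hKd).elim
  -- p6 impossible
  · exfalso; linarith
  · exfalso; linarith
  -- p7 (neg pos pos neg)
  · exact pair_ab a b c d hab hac had hbc hbd hcd hcirc hz1 hz2
      (by rw [k1]; exact mul_neg_of_pos_of_neg (neg_pos.mpr hk) h1)
      (by rw [k2]; exact mul_neg_of_neg_of_pos hk h2)
      (by rw [k3]; exact (mul_pos (neg_pos.mpr hk) h3).le)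
      (mul_pos_of_neg_of_neg hk h4).le
  · exact pair_cd a b c d hab hac had hbc hbd hcd hcirc hz3 hz4
      (by rw [k3]; exact mul_neg_of_neg_of_pos (neg_lt_zero.mpr hk) h3)
      (mul_neg_of_pos_of_neg hk h4)
      (by rw [k1]; exact (mul_pos_of_neg_of_neg (neg_lt_zero.mpr hk) h1).le)
      (by rw [k2]; exact (mul_pos hk h2).le)
  -- p8 kill_c
  · exact (inside_contra hz3 (by rw [j4]; exact mul_pos (neg_pos.mpr h1) h3)
      (mul_pos h2 h3) (mul_pos h4 h3) hsub_abd hKc).elim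
  · exact (inside_contra hz3 (by rw [j4]; exact mul_pos (neg_pos.mpr h1) h3)
      (mul_pos h2 h3) (mul_pos h4 h3) hsub_abd hKc).elim
  -- p9 kill_c
  · exact (inside_contra hz3
      (by rw [j4]; exact mul_pos_of_neg_of_neg (neg_lt_zero.mpr h1) h3)
      (mul_pos_of_neg_of_neg h2 h3) (mul_pos_of_neg_of_neg h4 h3) hsub_abd hKc).elim
  · exact (inside_contra hz3
      (by rw [j4]; exact mul_pos_of_neg_of_neg (neg_lt_zero.mpr h1) h3)
      (mul_pos_of_neg_of_neg h2 h3) (mul_pos_of_neg_of_neg h4 h3) hsub_abd hKc).elim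
  -- p10 (pos neg neg pos)
  · exact pair_cd a b c d hab hac had hbc hbd hcd hcirc hz3 hz4
      (by rw [k3]; exact mul_neg_of_pos_of_neg (neg_pos.mpr hk) h3)
      (mul_neg_of_neg_of_pos hk h4)
      (by rw [k1]; exact (mul_pos (neg_pos.mpr hk) h1).le)
      (by rw [k2]; exact (mul_pos_of_neg_of_neg hk h2).le)
  · exact pair_ab a b c d hab hac had hbc hbd hcd hcirc hz1 hz2
      (by rw [k1]; exact mul_neg_of_neg_of_pos (neg_lt_zero.mpr hk) h1)
      (by rw [k2]; exact mul_neg_of_pos_of_neg hk h2)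
      (by rw [k3]; exact (mul_pos_of_neg_of_neg (neg_lt_zero.mpr hk) h3).le)
      (mul_pos hk h4).le
  -- p11 impossible
  · exfalso; linarith
  · exfalso; linarith
  -- p12 kill_d
  · exact (inside_contra hz4 (by rw [j5]; exact mul_pos h1 h4)
      (by rw [j6]; exact mul_pos (neg_pos.mpr h2) h4) (mul_pos h3 h4) hsub_abc hKd).elim
  · exact (inside_contra hz4 (by rw [j5]; exact mul_pos h1 h4)
      (by rw [j6]; exact mul_pos (neg_pos.mpr h2) h4) (mul_pos h3 h4) hsub_abc hKd).elim
  -- p13 (pos pos neg neg)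
  · exact pair_bc a b c d hab hac had hbc hbd hcd hcirc hz2 hz3
      (by rw [k2]; exact mul_neg_of_neg_of_pos hk h2)
      (by rw [k3]; exact mul_neg_of_pos_of_neg (neg_pos.mpr hk) h3)
      (by rw [k1]; exact (mul_pos (neg_pos.mpr hk) h1).le)
      (mul_pos_of_neg_of_neg hk h4).le
  · exact pair_ad a b c d hab hac had hbc hbd hcd hcirc hz1 hz4
      (by rw [k1]; exact mul_neg_of_neg_of_pos (neg_lt_zero.mpr hk) h1)
      (mul_neg_of_pos_of_neg hk h4)
      (by rw [k2]; exact (mul_pos hk h2).le)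
      (by rw [k3]; exact (mul_pos_of_neg_of_neg (neg_lt_zero.mpr hk) h3).le)
  -- p14 kill_a
  · exact (inside_contra hz1 (mul_pos h2 h1)
      (by rw [j2]; exact mul_pos (neg_pos.mpr h3) h1)
      (by rw [j3]; exact mul_pos h4 h1) hsub_bcd hKa).elim
  · exact (inside_contra hz1 (mul_pos h2 h1)
      (by rw [j2]; exact mul_pos (neg_pos.mpr h3) h1)
      (by rw [j3]; exact mul_pos h4 h1) hsub_bcd hKa).elim
  -- p15 kill_b
  · exact (inside_contra hz2 (mul_pos h1 h2) (mul_pos h3 h2)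
      (by rw [j1]; exact mul_pos (neg_pos.mpr h4) h2) hsub_acd hKb).elim
  · exact (inside_contra hz2 (mul_pos h1 h2) (mul_pos h3 h2)
      (by rw [j1]; exact mul_pos (neg_pos.mpr h4) h2) hsub_acd hKb).elim
  -- p16 (pos pos pos pos)
  · exact master a b c d hab hac had hbc hbd hcd hcirc hz2 hz4
      (by rw [k2]; exact mul_neg_of_neg_of_pos hk h2)
      (mul_neg_of_neg_of_pos hk h4)
      (by rw [k1]; exact (mul_pos (neg_pos.mpr hk) h1).le)
      (by rw [k3]; exact (mul_pos (neg_pos.mpr hk) h3).le)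
  · exact pair_ac a b c d hab hac had hbc hbd hcd hcirc hz1 hz3
      (by rw [k1]; exact mul_neg_of_neg_of_pos (neg_lt_zero.mpr hk) h1)
      (by rw [k3]; exact mul_neg_of_neg_of_pos (neg_lt_zero.mpr hk) h3)
      (by rw [k2]; exact (mul_pos hk h2).le)
      (mul_pos hk h4).le

theorem four_points_convex_position (P : Set Plane) (hP : P.Finite)
    (h4 : P.ncard = 4) (hbd : (Bd P).ncard = 4) (hcol : ¬ Collinear ℝ P)
    (hcirc : ¬ ∃ c : Plane, ∃ r : ℝ, 0 < r ∧ ∀ p ∈ P, dist p c = r) :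
    (vtx P).ncard = 2 ∧ ∀ n : ℕ, 2 ≤ n → vtx^[n] P = ∅ := by
  obtain ⟨a, haP⟩ : P.Nonempty := Set.nonempty_of_ncard_ne_zero (by omega)
  have h3 : (P \ {a}).ncard = 3 := by
    rw [Set.ncard_diff_singleton_of_mem haP]; omega
  obtain ⟨b, c, d, nbc, nbd, ncd, hrest⟩ := Set.ncard_eq_three.mp h3
  have hbm : b ∈ P \ {a} := by rw [hrest]; simp
  have hcm : c ∈ P \ {a} := by rw [hrest]; simp
  have hdm : d ∈ P \ {a} := by rw [hrest]; simp
  have nab : a ≠ b := fun h => hbm.2 h.symm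
  have nac : a ≠ c := fun h => hcm.2 h.symm
  have nad : a ≠ d := fun h => hdm.2 h.symm
  have hPeq : P = {a, b, c, d} := by
    rw [show ({a, b, c, d} : Set Plane) = insert a ({b, c, d} : Set Plane) from rfl, ← hrest,
      Set.insert_diff_singleton, Set.insert_eq_of_mem haP]
  have hBdeq : Bd P = P :=
    Set.eq_of_subset_of_ncard_le Set.inter_subset_left (by rw [h4, hbd]) hP
  have hint : ∀ p ∈ ({a, b, c, d} : Set Plane),
      p ∉ interior (convexHull ℝ ({a, b, c, d} : Set Plane)) := by
    rw [← hPeq]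
    intro p hp hpint
    have hpBd : p ∈ Bd P := hBdeq.symm ▸ hp
    exact hpBd.2.2 hpint
  have hcol' : ¬ Collinear ℝ ({a, b, c, d} : Set Plane) := by rw [← hPeq]; exact hcol
  have hcirc' : ¬ ∃ o : Plane, ∃ r : ℝ, 0 < r ∧ dist a o = r ∧ dist b o = r ∧ dist c o = r ∧
      dist d o = r := by
    rintro ⟨o, r, hr, e1, e2, e3, e4⟩
    refine hcirc ⟨o, r, hr, ?_⟩
    rw [hPeq]
    rintro p (rfl | rfl | rfl | rfl)
    exacts [e1, e2, e3, e4]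
  obtain ⟨o₁, o₂, hne, hv⟩ :=
    main_pair a b c d nab nac nad nbc nbd ncd hcol' hcirc' hint
  rw [hPeq]
  constructor
  · rw [hv]
    exact Set.ncard_pair hne
  · intro n hn
    obtain ⟨m, rfl⟩ : ∃ m, n = m + 2 := ⟨n - 2, by omega⟩
    have hv2 : vtx^[2] ({a, b, c, d} : Set Plane) = ∅ := by
      have h2 : vtx (vtx ({a, b, c, d} : Set Plane)) = ∅ := by
        rw [hv]
        exact vtx_of_small (Set.encard_pair hne).le
      simpa [Function.iterate_succ_apply'] using h2
    rw [Function.iterate_add_apply, hv2]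
    exact Function.iterate_fixed (vtx_of_small (by simp)) m
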